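/- arXiv:1401.3079 — 2 statements merged into one kernel-verified Lean document; each statement's English description precedes it below -/
import Mathlib

section
/- Differentiation formula for the second kind: (d/dx) D̂_n(x|a_1,…,a_r) = n! ∑_{l=0}^{n-1} ((-1)^{n-l-1}/(l!(n-l))) D̂_l(x|a_1,…,a_r). -/
open Finset PowerSeries

/-- Exponential generating function: `∑ f n * t^n / n!`. -/
noncomputable def egf (f : ℕ → ℚ) : PowerSeries ℚ :=
  PowerSeries.mk fun n => f n / n.factorial

/-- The formal power series `log(1+t) = ∑_{m≥1} (-1)^{m-1} t^m / m`. -/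
noncomputable def log1p : PowerSeries ℚ :=
  PowerSeries.mk fun n => if n = 0 then 0 else (-1) ^ (n - 1) / n

/-- Formal exponential composition: for `f` with zero constant term this is
`exp(f) = ∑_k f^k / k!` (the sum in each coefficient is finite). -/
noncomputable def expPS (f : PowerSeries ℚ) : PowerSeries ℚ :=
  PowerSeries.mk fun n =>
    ∑ k ∈ Finset.range (n + 1), (PowerSeries.coeff n (f ^ k)) / k.factorial

/-- `(1+t)^a := exp(a · log(1+t))` as a formal power series. -/
noncomputable def onePow (a : ℚ) : PowerSeries ℚ := expPS (PowerSeries.C a * log1p)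

/-- `e^{a t} = ∑ a^n t^n / n!`. -/
noncomputable def expAt (a : ℚ) : PowerSeries ℚ :=
  PowerSeries.mk fun n => a ^ n / n.factorial

/-- Falling factorial `(x)_n = x(x-1)⋯(x-n+1)`. -/
noncomputable def ffall (x : ℚ) (n : ℕ) : ℚ := ∏ i ∈ Finset.range n, (x - i)

open Polynomial


lemma coeff_log1p (n : ℕ) : PowerSeries.coeff n log1p = if n = 0 then 0 else ((-1:ℚ))^(n-1)/n := by
  simp [log1p]

lemma constCoeff_log1p : PowerSeries.constantCoeff log1p = 0 := by
  rw [← PowerSeries.coeff_zero_eq_constantCoeff]; simp [coeff_log1p]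

lemma coeff_pow_vanish {f : PowerSeries ℚ} (hf : PowerSeries.constantCoeff f = 0)
    {m k : ℕ} (h : m < k) : PowerSeries.coeff m (f ^ k) = 0 := by
  have : (PowerSeries.X : PowerSeries ℚ) ^ k ∣ f ^ k :=
    pow_dvd_pow_of_dvd (PowerSeries.X_dvd_iff.mpr hf) k
  exact PowerSeries.X_pow_dvd_iff.mp this m h

/-- coefficient of `g * expPS f` for `f` with zero constant term -/
lemma coeff_mul_expPS (g f : PowerSeries ℚ) (hf : PowerSeries.constantCoeff f = 0) (n : ℕ) :
    PowerSeries.coeff n (g * expPS f) =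
      ∑ k ∈ Finset.range (n+1), PowerSeries.coeff n (g * f ^ k) / k.factorial := by
  rw [PowerSeries.coeff_mul]
  have h1 : ∀ p ∈ antidiagonal n,
      PowerSeries.coeff p.1 g * PowerSeries.coeff p.2 (expPS f)
        = ∑ k ∈ Finset.range (n+1),
            PowerSeries.coeff p.1 g * PowerSeries.coeff p.2 (f ^ k) / k.factorial := by
    intro p hp
    have hple : p.2 ≤ n := by
      have h2 : p.1 + p.2 = n := Finset.HasAntidiagonal.mem_antidiagonal.mp hp
      omega
    rw [expPS, PowerSeries.coeff_mk, Finset.mul_sum]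
    rw [← Finset.sum_subset (Finset.range_subset_range.mpr (by omega : p.2 + 1 ≤ n + 1))]
    · congr 1; ext k; ring
    · intro k _ hk
      have : p.2 < k := by simp at hk ⊢; omega
      rw [coeff_pow_vanish hf this]; simp
  rw [Finset.sum_congr rfl h1, Finset.sum_comm]
  congr 1; ext k
  rw [PowerSeries.coeff_mul, Finset.sum_div]

noncomputable def Qpoly (n : ℕ) : Polynomial ℚ :=
  ∑ k ∈ Finset.range (n+1), Polynomial.C (PowerSeries.coeff n (log1p ^ k) / k.factorial) * Polynomial.X ^ k

noncomputable def Qpoly' (n : ℕ) : Polynomial ℚ :=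
  ∑ k ∈ Finset.range (n+1), Polynomial.C (PowerSeries.coeff n (log1p ^ (k+1)) / k.factorial) * Polynomial.X ^ k

lemma coeff_CxLog_pow (x : ℚ) (k n : ℕ) :
    PowerSeries.coeff n ((PowerSeries.C x * log1p) ^ k) = x ^ k * PowerSeries.coeff n (log1p ^ k) := by
  rw [mul_pow, ← map_pow, PowerSeries.coeff_C_mul]

lemma constCoeff_CxLog (x : ℚ) : PowerSeries.constantCoeff (PowerSeries.C x * log1p) = 0 := by
  simp [constCoeff_log1p]

lemma eval_Qpoly (x : ℚ) (n : ℕ) :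
    Polynomial.eval x (Qpoly n) = PowerSeries.coeff n (onePow x) := by
  rw [onePow, expPS, PowerSeries.coeff_mk, Qpoly, Polynomial.eval_finset_sum]
  refine Finset.sum_congr rfl fun k _ => ?_
  rw [coeff_CxLog_pow]; simp; ring

lemma eval_Qpoly' (x : ℚ) (n : ℕ) :
    Polynomial.eval x (Qpoly' n) = PowerSeries.coeff n (log1p * onePow x) := by
  rw [onePow, coeff_mul_expPS _ _ (constCoeff_CxLog x), Qpoly', Polynomial.eval_finset_sum]
  refine Finset.sum_congr rfl fun k _ => ?_
  have : log1p * (PowerSeries.C x * log1p) ^ k = PowerSeries.C (x^k) * log1p ^ (k+1) := by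
    rw [mul_pow, ← map_pow]; ring
  rw [this, PowerSeries.coeff_C_mul]; simp; ring

lemma derivative_Qpoly (n : ℕ) : Polynomial.derivative (Qpoly n) = Qpoly' n := by
  rw [Qpoly, map_sum, Finset.sum_range_succ', Qpoly', Finset.sum_range_succ]
  have htop : PowerSeries.coeff n (log1p ^ (n+1)) = 0 :=
    coeff_pow_vanish constCoeff_log1p (Nat.lt_succ_self n)
  rw [htop]
  simp only [pow_zero, mul_one, Polynomial.derivative_C, map_zero, zero_div, map_zero, zero_mul,
    add_zero]
  refine Finset.sum_congr rfl fun k _ => ?_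
  rw [Polynomial.derivative_C_mul, Polynomial.derivative_X_pow]
  have h2 : k + 1 - 1 = k := rfl
  rw [h2, ← mul_assoc, ← Polynomial.C_mul]
  congr 1
  have h1 : (k.factorial : ℚ) ≠ 0 := Nat.cast_ne_zero.mpr k.factorial_ne_zero
  rw [Nat.factorial_succ]
  push_cast
  field_simp
  try ring

lemma coeff_one_onePow (x : ℚ) : PowerSeries.coeff 1 (onePow x) = x := by
  rw [onePow, expPS, PowerSeries.coeff_mk]
  rw [show (1:ℕ)+1 = 2 from rfl, Finset.sum_range_succ, Finset.sum_range_one]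
  simp [coeff_CxLog_pow, coeff_log1p]

lemma onePow_sub_one_ne_zero {x : ℚ} (hx : x ≠ 0) : onePow x - 1 ≠ 0 := by
  intro h
  have : PowerSeries.coeff 1 (onePow x - 1) = x := by
    rw [map_sub, coeff_one_onePow]
    simp
  rw [h] at this
  simp at this
  exact hx this.symm

lemma key_transfer (r : ℕ) (a : Fin r → ℚ) (Dh : ℕ → Polynomial ℚ)
    (hDh : ∀ x : ℚ, (∏ j, (onePow (a j) - 1)) * egf (fun n => (Dh n).eval x)
      = (∏ j, onePow (a j)) * log1p ^ r * onePow x) (x : ℚ) :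
    (∏ j, (onePow (a j) - 1)) * egf (fun n => ((Polynomial.derivative (Dh n)).eval x))
      = (∏ j, onePow (a j)) * log1p ^ r * (log1p * onePow x) := by
  set M : PowerSeries ℚ := ∏ j, (onePow (a j) - 1) with hM
  set Rp : PowerSeries ℚ := (∏ j, onePow (a j)) * log1p ^ r with hRp
  ext n
  set Ln : Polynomial ℚ :=
    ∑ p ∈ antidiagonal n, Polynomial.C (PowerSeries.coeff p.1 M / p.2.factorial) * Dh p.2 with hLn
  set Rn : Polynomial ℚ :=
    ∑ p ∈ antidiagonal n, Polynomial.C (PowerSeries.coeff p.1 Rp) * Qpoly p.2 with hRn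
  have hL : ∀ g : ℕ → Polynomial ℚ, ∀ y : ℚ,
      PowerSeries.coeff n (M * egf (fun m => (g m).eval y))
        = Polynomial.eval y (∑ p ∈ antidiagonal n,
            Polynomial.C (PowerSeries.coeff p.1 M / p.2.factorial) * g p.2) := by
    intro g y
    rw [PowerSeries.coeff_mul, Polynomial.eval_finset_sum]
    refine Finset.sum_congr rfl fun p _ => ?_
    rw [egf, PowerSeries.coeff_mk]
    simp only [Polynomial.eval_mul, Polynomial.eval_C]
    ring
  have hR : ∀ y : ℚ, PowerSeries.coeff n (Rp * onePow y) = Polynomial.eval y Rn := by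
    intro y
    rw [PowerSeries.coeff_mul, hRn, Polynomial.eval_finset_sum]
    refine Finset.sum_congr rfl fun p _ => ?_
    simp only [Polynomial.eval_mul, Polynomial.eval_C, eval_Qpoly]
  have hLR : Ln = Rn := by
    apply Polynomial.funext
    intro y
    rw [← hL Dh y, ← hR y]
    exact congrArg _ (hDh y)
  have hdLR := congrArg Polynomial.derivative hLR
  have hdL : Polynomial.derivative Ln = ∑ p ∈ antidiagonal n,
      Polynomial.C (PowerSeries.coeff p.1 M / p.2.factorial) * Polynomial.derivative (Dh p.2) := by
    rw [hLn, map_sum]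
    exact Finset.sum_congr rfl fun p _ => Polynomial.derivative_C_mul _ _
  have hdR : Polynomial.derivative Rn = ∑ p ∈ antidiagonal n,
      Polynomial.C (PowerSeries.coeff p.1 Rp) * Qpoly' p.2 := by
    rw [hRn, map_sum]
    refine Finset.sum_congr rfl fun p _ => ?_
    rw [Polynomial.derivative_C_mul, derivative_Qpoly]
  calc PowerSeries.coeff n (M * egf fun m => (Polynomial.derivative (Dh m)).eval x)
      = Polynomial.eval x (Polynomial.derivative Ln) := by
        rw [hL (fun m => Polynomial.derivative (Dh m)) x, hdL]
    _ = Polynomial.eval x (Polynomial.derivative Rn) := by rw [hdLR]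
    _ = PowerSeries.coeff n (Rp * (log1p * onePow x)) := by
        rw [hdR, PowerSeries.coeff_mul, Polynomial.eval_finset_sum]
        refine Finset.sum_congr rfl fun p _ => ?_
        simp only [Polynomial.eval_mul, Polynomial.eval_C, eval_Qpoly']
theorem stmt10 (r : ℕ) (a : Fin r → ℚ) (ha : ∀ j, a j ≠ 0) (Dh : ℕ → Polynomial ℚ)
    (hDh : ∀ x : ℚ, (∏ j, (onePow (a j) - 1)) * egf (fun n => (Dh n).eval x) = (∏ j, onePow (a j)) * log1p ^ r * onePow x)
    (n : ℕ) :
    Polynomial.derivative (Dh n) =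
      ∑ l ∈ Finset.range n,
        Polynomial.C ((n.factorial : ℚ) * (-1) ^ (n - l - 1) /
          ((l.factorial : ℚ) * ((n - l : ℕ) : ℚ))) * Dh l := by
  have hMne : (∏ j, (onePow (a j) - 1)) ≠ 0 :=
    Finset.prod_ne_zero_iff.mpr fun j _ => onePow_sub_one_ne_zero (ha j)
  have hegf : ∀ x : ℚ, egf (fun m => (Polynomial.derivative (Dh m)).eval x)
      = log1p * egf (fun m => (Dh m).eval x) := by
    intro x
    apply mul_left_cancel₀ hMne
    rw [key_transfer r a Dh hDh x]
    calc (∏ j, onePow (a j)) * log1p ^ r * (log1p * onePow x)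
        = log1p * ((∏ j, onePow (a j)) * log1p ^ r * onePow x) := by ring
      _ = log1p * ((∏ j, (onePow (a j) - 1)) * egf (fun m => (Dh m).eval x)) := by rw [← hDh x]
      _ = (∏ j, (onePow (a j) - 1)) * (log1p * egf (fun m => (Dh m).eval x)) := by ring
  apply Polynomial.funext
  intro x
  have h1 := congrArg (PowerSeries.coeff n) (hegf x)
  rw [PowerSeries.coeff_mul] at h1
  simp only [egf, PowerSeries.coeff_mk] at h1
  have hfact : (n.factorial : ℚ) ≠ 0 := Nat.cast_ne_zero.mpr n.factorial_ne_zero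
  rw [div_eq_iff hfact] at h1
  have h2 : (Polynomial.derivative (Dh n)).eval x =
      n.factorial * ∑ p ∈ antidiagonal n,
        PowerSeries.coeff p.1 log1p * ((Dh p.2).eval x / p.2.factorial) := by
    rw [h1]; ring
  rw [Polynomial.eval_finset_sum, h2,
    Finset.Nat.sum_antidiagonal_eq_sum_range_succ
      (fun k m => PowerSeries.coeff k log1p * ((Dh m).eval x / m.factorial)) n,
    Finset.sum_range_succ']
  simp only [coeff_log1p, reduceIte, zero_mul, add_zero]
  conv_rhs => rw [← Finset.sum_range_reflect]
  rw [Finset.mul_sum]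
  refine Finset.sum_congr rfl fun k hk => ?_
  have hkn : k < n := Finset.mem_range.mp hk
  have e1 : n - (k + 1) = n - 1 - k := by omega
  have e2 : n - (n - 1 - k) - 1 = k := by omega
  have e3 : n - (n - 1 - k) = k + 1 := by omega
  have hne : (k + 1 : ℕ) ≠ 0 := by omega
  rw [if_neg hne, e1, Polynomial.eval_mul, Polynomial.eval_C, e2, e3]
  have hk1 : ((k : ℚ) + 1) ≠ 0 := by positivity
  have hfk : ((n - 1 - k).factorial : ℚ) ≠ 0 := Nat.cast_ne_zero.mpr (n - 1 - k).factorial_ne_zero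
  push_cast
  field_simp
end

section
/- Stirling-number identity: for n−1 ≥ m ≥ 1, ∑_{l=0}^{n-m} C(n,l) S_1(n−l,m) D_l(a_1,…,a_r) = ∑_{l=0}^{n-m} C(n−1,l) S_1(n−l−1,m−1) D_l(−1|a_1,…,a_r) + (1/n) ∑_{l=0}^{n-m-1} C(n,l+1) S_1(n−l−1,m) [ r ∑_{i=0}^{l+1} C(l+1,i) c_i D_{l+1−i}(−1|a_1,…,a_r) − ∑_{j=1}^r ∑_{i=0}^{l+1} C(l+1,i) a_j c_i D_{l+1−i}(a_j−1|a_1,…,a_r,a_j) ]. -/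
open Finset PowerSeries

-- toolkit
lemma coeff_pow_zero_of_lt {f : ℚ⟦X⟧} (hf : constantCoeff f = 0) {n k : ℕ} (h : n < k) :
    coeff n (f ^ k) = 0 := by
  have : (X : ℚ⟦X⟧) ^ k ∣ f ^ k := pow_dvd_pow_of_dvd (X_dvd_iff.2 hf) k
  exact X_pow_dvd_iff.1 this n h

noncomputable def truncE (f : ℚ⟦X⟧) (N : ℕ) : ℚ⟦X⟧ :=
  ∑ k ∈ Finset.range N, ((k.factorial : ℚ)⁻¹) • f ^ k

lemma coeff_expPS_eq (f : ℚ⟦X⟧) (hf : constantCoeff f = 0) {n N : ℕ} (h : n < N) :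
    coeff n (expPS f) = coeff n (truncE f N) := by
  rw [expPS, truncE, coeff_mk, map_sum]
  rw [Finset.sum_subset (Finset.range_subset_range.2 h)]
  · apply Finset.sum_congr rfl
    intro k _
    rw [coeff_smul, smul_eq_mul, div_eq_inv_mul]
  · intro k _ hk
    rw [Finset.mem_range] at hk
    rw [coeff_pow_zero_of_lt hf (by omega), zero_div]

lemma qsmul_eq (q : ℚ) (g : ℚ⟦X⟧) : q • g = C q * g :=
  PowerSeries.smul_eq_C_mul g q

lemma deriv_truncE (f : ℚ⟦X⟧) (N : ℕ) :
    d⁄dX ℚ (truncE f (N + 1)) = d⁄dX ℚ f * truncE f N := by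
  rw [truncE, map_sum, Finset.sum_range_succ']
  have h0 : (d⁄dX ℚ) (((Nat.factorial 0 : ℚ))⁻¹ • f ^ 0) = 0 := by
    simp
  rw [h0, add_zero, truncE, Finset.mul_sum]
  apply Finset.sum_congr rfl
  intro k _
  rw [Derivation.map_smul, Derivation.leibniz_pow, Nat.add_sub_cancel]
  rw [qsmul_eq, qsmul_eq, smul_eq_mul, nsmul_eq_mul]
  rw [Nat.factorial_succ]
  push_cast
  rw [mul_inv, map_mul]
  have h1 : (C) ((k:ℚ)+1)⁻¹ * ((k:ℚ⟦X⟧)+1) = 1 := by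
    have : ((k:ℚ⟦X⟧)+1) = C ((k:ℚ)+1) := by
      rw [map_add, map_natCast, map_one]
    rw [this, ← map_mul, inv_mul_cancel₀ (by positivity), map_one]
  calc (C) (((k:ℚ) + 1)⁻¹) * (C) (((k.factorial:ℚ))⁻¹) * (((k:ℚ⟦X⟧) + 1) * (f ^ k * (d⁄dX ℚ) f))
      = ((C) ((k:ℚ)+1)⁻¹ * ((k:ℚ⟦X⟧)+1)) * ((C) (((k.factorial:ℚ))⁻¹) * (f ^ k * (d⁄dX ℚ) f)) := by ring
    _ = _ := by rw [h1, one_mul]; ring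

lemma deriv_expPS (f : ℚ⟦X⟧) (hf : constantCoeff f = 0) :
    d⁄dX ℚ (expPS f) = d⁄dX ℚ f * expPS f := by
  ext n
  rw [coeff_derivative, coeff_expPS_eq f hf (show n+1 < n+2 by omega),
    ← coeff_derivative, deriv_truncE]
  rw [coeff_mul, coeff_mul]
  apply Finset.sum_congr rfl
  intro p hp
  rw [Finset.HasAntidiagonal.mem_antidiagonal] at hp
  rw [coeff_expPS_eq f hf (show p.2 < n + 1 by omega)]

noncomputable def Jps : ℚ⟦X⟧ := PowerSeries.mk fun n => (-1 : ℚ) ^ n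

lemma constantCoeff_log1p : constantCoeff log1p = 0 := by
  rw [log1p, ← coeff_zero_eq_constantCoeff, coeff_mk]; simp

lemma coeff_one_log1p : coeff 1 log1p = 1 := by rw [log1p, coeff_mk]; norm_num

lemma deriv_log1p : d⁄dX ℚ log1p = Jps := by
  ext n
  rw [coeff_derivative, log1p, Jps, coeff_mk, coeff_mk]
  have : ¬ (n + 1 = 0) := by omega
  rw [if_neg this]
  rw [Nat.add_sub_cancel]
  rw [div_mul_eq_mul_div]
  rw [Nat.cast_add, Nat.cast_one]
  rw [mul_div_assoc, div_self (by positivity), mul_one]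

lemma one_add_X_mul_Jps : (1 + X) * Jps = 1 := by
  ext n
  rw [add_mul, one_mul, map_add, Jps, coeff_mk]
  rcases n with _ | k
  · simp
  · rw [coeff_succ_X_mul, coeff_mk, coeff_one, if_neg (by omega)]
    ring

lemma constantCoeff_CL (q : ℚ) : constantCoeff (C q * log1p) = 0 := by
  rw [map_mul, constantCoeff_log1p, mul_zero]

lemma deriv_onePow (q : ℚ) : d⁄dX ℚ (onePow q) = C q * Jps * onePow q := by
  rw [onePow, deriv_expPS _ (constantCoeff_CL q), Derivation.leibniz, derivative_C,
    smul_zero, add_zero, smul_eq_mul, deriv_log1p, ← onePow]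

lemma constantCoeff_expPS (f : ℚ⟦X⟧) : constantCoeff (expPS f) = 1 := by
  rw [expPS, ← coeff_zero_eq_constantCoeff, coeff_mk]
  simp

lemma constantCoeff_onePow (q : ℚ) : constantCoeff (onePow q) = 1 :=
  constantCoeff_expPS _

lemma onePlusX_mul_onePow_neg_one : (1 + X) * onePow (-1) = 1 := by
  apply derivative.ext
  · rw [Derivation.leibniz, deriv_onePow, map_add, derivative_X,
      Derivation.map_one_eq_zero, zero_add, smul_eq_mul, smul_eq_mul]
    have hC : (C) (-1 : ℚ) = -1 := by simp
    rw [hC]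
    linear_combination (-(onePow (-1))) * one_add_X_mul_Jps
  · rw [map_mul, map_add, map_one, constantCoeff_X, constantCoeff_onePow]
    norm_num

lemma Jps_eq_onePow_neg_one : Jps = onePow (-1) := by
  have h : Jps * ((1 + X) * onePow (-1)) = Jps := by
    rw [onePlusX_mul_onePow_neg_one, mul_one]
  calc Jps = Jps * ((1 + X) * onePow (-1)) := h.symm
    _ = ((1 + X) * Jps) * onePow (-1) := by ring
    _ = onePow (-1) := by rw [one_add_X_mul_Jps, one_mul]

lemma deriv_mul_onePow_type {u v : ℚ⟦X⟧} {au av : ℚ}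
    (hu : d⁄dX ℚ u = C au * Jps * u) (hv : d⁄dX ℚ v = C av * Jps * v) :
    d⁄dX ℚ (u * v) = C (au + av) * Jps * (u * v) := by
  rw [Derivation.leibniz, smul_eq_mul, smul_eq_mul, hu, hv, map_add]
  ring

lemma onePow_mul_neg (q : ℚ) : onePow q * onePow (-q) = 1 := by
  apply derivative.ext
  · rw [deriv_mul_onePow_type (deriv_onePow q) (deriv_onePow (-q))]
    simp
  · rw [map_mul, constantCoeff_onePow, constantCoeff_onePow, map_one, mul_one]

lemma onePow_add (p q : ℚ) : onePow p * onePow q = onePow (p + q) := by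
  have hg : onePow p * onePow q * onePow (-(p + q)) = 1 := by
    apply derivative.ext
    · rw [deriv_mul_onePow_type (deriv_mul_onePow_type (deriv_onePow p) (deriv_onePow q))
        (deriv_onePow (-(p+q)))]
      rw [show p + q + -(p + q) = 0 by ring, map_zero, zero_mul, zero_mul,
        Derivation.map_one_eq_zero]
    · rw [map_mul, map_mul, constantCoeff_onePow, constantCoeff_onePow,
        constantCoeff_onePow, map_one]
      norm_num
  calc onePow p * onePow q = onePow p * onePow q * (onePow (-(p+q)) * onePow (-(-(p+q)))) := by
        rw [onePow_mul_neg, mul_one]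
    _ = (onePow p * onePow q * onePow (-(p+q))) * onePow (p+q) := by rw [neg_neg]; ring
    _ = onePow (p + q) := by rw [hg, one_mul]

lemma onePow_zero : onePow 0 = 1 := by
  have h : onePow 0 * onePow (-0) = 1 := onePow_mul_neg 0
  rw [neg_zero] at h
  have h2 : onePow 0 * onePow 0 = onePow 0 := by
    rw [onePow_add]; norm_num
  exact h2.symm.trans h

lemma coeff_one_expPS (f : ℚ⟦X⟧) (hf : constantCoeff f = 0) :
    coeff 1 (expPS f) = coeff 1 f := by
  rw [expPS, coeff_mk]
  rw [Finset.sum_range_succ, Finset.sum_range_one]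
  simp

lemma coeff_one_onePow_s16 (q : ℚ) : coeff 1 (onePow q) = q := by
  rw [onePow, coeff_one_expPS _ (constantCoeff_CL q), coeff_C_mul, coeff_one_log1p, mul_one]

lemma onePow_sub_one_ne_zero_s16 {q : ℚ} (hq : q ≠ 0) : onePow q - 1 ≠ 0 := by
  intro h
  have : coeff 1 (onePow q - 1) = 0 := by rw [h, map_zero]
  rw [map_sub, coeff_one_onePow_s16, coeff_one, if_neg one_ne_zero, sub_zero] at this
  exact hq this

lemma log1p_ne_zero : log1p ≠ 0 := by
  intro h
  have : coeff 1 log1p = 0 := by rw [h, map_zero]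
  rw [coeff_one_log1p] at this
  exact one_ne_zero this

lemma derivPS_prod {ι : Type*} [DecidableEq ι] (s : Finset ι) (f : ι → ℚ⟦X⟧) :
    d⁄dX ℚ (∏ i ∈ s, f i) = ∑ i ∈ s, d⁄dX ℚ (f i) * ∏ j ∈ s.erase i, f j := by
  induction s using Finset.induction_on with
  | empty => simp
  | @insert x s' hx ih =>
    rw [Finset.prod_insert hx, Derivation.leibniz, smul_eq_mul, smul_eq_mul, ih,
      Finset.sum_insert hx, Finset.erase_insert hx, Finset.mul_sum]
    have hsum : ∑ i ∈ s', f x * (d⁄dX ℚ (f i) * ∏ j ∈ s'.erase i, f j)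
        = ∑ i ∈ s', d⁄dX ℚ (f i) * ∏ j ∈ (insert x s').erase i, f j := by
      apply Finset.sum_congr rfl
      intro i hi
      have hne : i ≠ x := fun h => hx (h ▸ hi)
      rw [Finset.erase_insert_of_ne hne.symm,
        Finset.prod_insert (fun h => hx (Finset.mem_of_mem_erase h))]
      ring
    rw [hsum]
    ring

lemma mul_deriv_pow (g : ℚ⟦X⟧) (k : ℕ) :
    g * d⁄dX ℚ (g ^ k) = (k : ℚ⟦X⟧) * (g ^ k * d⁄dX ℚ g) := by
  cases k with
  | zero => simp
  | succ k =>
    rw [Derivation.leibniz_pow, Nat.add_sub_cancel, nsmul_eq_mul, smul_eq_mul]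
    push_cast
    rw [pow_succ]
    ring

lemma master (r : ℕ) (a : Fin r → ℚ) (ha : ∀ j, a j ≠ 0)
    (G0 Gm Ec : ℚ⟦X⟧) (Ej : Fin r → ℚ⟦X⟧)
    (hD0 : (∏ j, (onePow (a j) - 1)) * G0 = log1p ^ r)
    (hDm : (∏ j, (onePow (a j) - 1)) * Gm = log1p ^ r * onePow (-1))
    (hEj : ∀ j, ((onePow (a j) - 1) * ∏ i, (onePow (a i) - 1)) * Ej j
        = log1p ^ (r + 1) * onePow (a j - 1))
    (hc : log1p * Ec = X) :
    X * d⁄dX ℚ G0 = (r : ℚ⟦X⟧) * (Ec * Gm) - ∑ j, C (a j) * (Ec * Ej j) := by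
  classical
  set L := log1p with hL
  set P := ∏ j, (onePow (a j) - 1) with hP
  set Q : Fin r → ℚ⟦X⟧ := fun j => ∏ i ∈ Finset.univ.erase j, (onePow (a i) - 1) with hQ
  have hPQ : ∀ j, (onePow (a j) - 1) * Q j = P := fun j =>
    Finset.mul_prod_erase Finset.univ (fun i => onePow (a i) - 1) (Finset.mem_univ j)
  have hPne : P ≠ 0 := by
    rw [hP]
    rw [Finset.prod_ne_zero_iff]
    exact fun j _ => onePow_sub_one_ne_zero_s16 (ha j)
  have hMne : L * P * P ≠ 0 := mul_ne_zero (mul_ne_zero log1p_ne_zero hPne) hPne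
  apply mul_left_cancel₀ hMne
  -- derivative of hD0
  have hder : P * d⁄dX ℚ G0 + G0 * d⁄dX ℚ P = d⁄dX ℚ (L ^ r) := by
    have h := congrArg (d⁄dX ℚ) hD0
    rw [Derivation.leibniz, smul_eq_mul, smul_eq_mul] at h
    exact h
  have hPd : P * d⁄dX ℚ G0 = d⁄dX ℚ (L ^ r) - G0 * d⁄dX ℚ P := eq_sub_of_add_eq hder
  have hLr : L * d⁄dX ℚ (L ^ r) = (r : ℚ⟦X⟧) * (L ^ r * Jps) := by
    rw [mul_deriv_pow, deriv_log1p]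
  have h2 : d⁄dX ℚ P = ∑ j, (C (a j) * onePow (a j - 1)) * Q j := by
    rw [hP, derivPS_prod]
    apply Finset.sum_congr rfl
    intro j _
    have hdj : d⁄dX ℚ (onePow (a j) - 1) = C (a j) * onePow (a j - 1) := by
      rw [map_sub, Derivation.map_one_eq_zero, sub_zero, deriv_onePow,
        Jps_eq_onePow_neg_one, mul_assoc, onePow_add]
      congr 2
      ring
    rw [hdj]
  have hsum : X * (L ^ (r + 1) * d⁄dX ℚ P) = ∑ j, C (a j) * (Ec * Ej j) * (L * P * P) := by
    rw [h2, Finset.mul_sum, Finset.mul_sum]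
    apply Finset.sum_congr rfl
    intro j _
    calc X * (L ^ (r+1) * (C (a j) * onePow (a j - 1) * Q j))
        = C (a j) * X * ((L ^ (r+1) * onePow (a j - 1)) * Q j) := by ring
      _ = C (a j) * X * ((((onePow (a j) - 1) * P) * Ej j) * Q j) := by rw [hEj j]
      _ = C (a j) * (L * Ec) * (Ej j * (((onePow (a j) - 1) * Q j) * P)) := by
          rw [← hc]; ring
      _ = C (a j) * (L * Ec) * (Ej j * (P * P)) := by rw [hPQ j]
      _ = C (a j) * (Ec * Ej j) * (L * P * P) := by ring
  have hr1 : (r : ℚ⟦X⟧) * (Ec * Gm) * (L * P * P) = X * (P * ((r : ℚ⟦X⟧) * (L ^ r * Jps))) := by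
    calc (r : ℚ⟦X⟧) * (Ec * Gm) * (L * P * P)
        = (r : ℚ⟦X⟧) * (L * Ec) * (P * Gm) * P := by ring
      _ = (r : ℚ⟦X⟧) * X * (L ^ r * onePow (-1)) * P := by rw [hc, hDm]
      _ = X * (P * ((r : ℚ⟦X⟧) * (L ^ r * Jps))) := by rw [Jps_eq_onePow_neg_one]; ring
  calc L * P * P * (X * d⁄dX ℚ G0)
      = X * (L * P * (P * d⁄dX ℚ G0)) := by ring
    _ = X * (P * (L * d⁄dX ℚ (L ^ r)) - L * (P * G0) * d⁄dX ℚ P) := by rw [hPd]; ring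
    _ = X * (P * ((r : ℚ⟦X⟧) * (L ^ r * Jps))) - X * (L ^ (r + 1) * d⁄dX ℚ P) := by
        rw [hD0, hLr, pow_succ]; ring
    _ = (r : ℚ⟦X⟧) * (Ec * Gm) * (L * P * P) - ∑ j, C (a j) * (Ec * Ej j) * (L * P * P) := by
        rw [hr1, hsum]
    _ = L * P * P * ((r : ℚ⟦X⟧) * (Ec * Gm) - ∑ j, C (a j) * (Ec * Ej j)) := by
        rw [← Finset.sum_mul]
        ring

lemma coeff_egf (f : ℕ → ℚ) (n : ℕ) : coeff n (egf f) = f n / n.factorial := by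
  rw [egf, coeff_mk]

lemma coeff_egf_mul (f g : ℕ → ℚ) (n : ℕ) :
    coeff n (egf f * egf g) =
      ∑ i ∈ Finset.range (n + 1), f i * g (n - i) / (i.factorial * (n - i).factorial) := by
  rw [coeff_mul, Finset.Nat.sum_antidiagonal_eq_sum_range_succ_mk]
  apply Finset.sum_congr rfl
  intro i _
  rw [coeff_egf, coeff_egf, div_mul_div_comm]

lemma fact_mul_div_fact (n i : ℕ) (h : i ≤ n) (u : ℚ) :
    (n.factorial : ℚ) * (u / (i.factorial * (n - i).factorial)) = (n.choose i : ℚ) * u := by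
  have hkey := Nat.choose_mul_factorial_mul_factorial h
  have : ((n.choose i : ℚ)) * (i.factorial : ℚ) * ((n - i).factorial : ℚ) = (n.factorial : ℚ) := by
    exact_mod_cast congrArg (Nat.cast : ℕ → ℚ) hkey
  rw [← this]
  have h1 : (i.factorial : ℚ) ≠ 0 := by positivity
  have h2 : ((n - i).factorial : ℚ) ≠ 0 := by positivity
  field_simp

noncomputable def spol (S1 : ℕ → ℕ → ℚ) (k : ℕ) : Polynomial ℚ :=
  ∑ j ∈ Finset.range (k + 1), Polynomial.C (S1 k j) * Polynomial.X ^ j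

lemma spol_coeff (S1 : ℕ → ℕ → ℚ) (k j : ℕ) :
    (spol S1 k).coeff j = if j < k + 1 then S1 k j else 0 := by
  rw [spol, Polynomial.finset_sum_coeff]
  simp_rw [Polynomial.coeff_C_mul, Polynomial.coeff_X_pow, mul_ite, mul_one, mul_zero]
  simp_rw [eq_comm (a := j)]
  rw [Finset.sum_ite_eq' (Finset.range (k + 1)) j (fun i => S1 k i)]
  simp [Finset.mem_range]

lemma spol_eval (S1 : ℕ → ℕ → ℚ)
    (hS1 : ∀ (l : ℕ) (x : ℚ), ffall x l = ∑ j ∈ Finset.range (l + 1), S1 l j * x ^ j)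
    (k : ℕ) (x : ℚ) : (spol S1 k).eval x = ffall x k := by
  rw [hS1, spol, Polynomial.eval_finset_sum]
  apply Finset.sum_congr rfl
  intro j _
  simp

lemma spol_step (S1 : ℕ → ℕ → ℚ)
    (hS1 : ∀ (l : ℕ) (x : ℚ), ffall x l = ∑ j ∈ Finset.range (l + 1), S1 l j * x ^ j)
    (k : ℕ) : spol S1 (k + 1) = spol S1 k * (Polynomial.X - Polynomial.C (k : ℚ)) := by
  apply Polynomial.funext
  intro x
  rw [Polynomial.eval_mul, spol_eval S1 hS1, spol_eval S1 hS1, Polynomial.eval_sub,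
    Polynomial.eval_X, Polynomial.eval_C]
  rw [ffall, ffall, Finset.prod_range_succ]

lemma S1_rec (S1 : ℕ → ℕ → ℚ)
    (hS1 : ∀ (l : ℕ) (x : ℚ), ffall x l = ∑ j ∈ Finset.range (l + 1), S1 l j * x ^ j)
    {k j : ℕ} (h : j + 1 ≤ k) : S1 (k + 1) (j + 1) = S1 k j - k * S1 k (j + 1) := by
  have hc := congrArg (fun p => Polynomial.coeff p (j + 1)) (spol_step S1 hS1 k)
  simp only [mul_sub, Polynomial.coeff_sub, Polynomial.coeff_mul_X, Polynomial.coeff_mul_C,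
    spol_coeff] at hc
  rw [if_pos (by omega), if_pos (by omega), if_pos (by omega)] at hc
  rw [hc]; ring

lemma S1_diag (S1 : ℕ → ℕ → ℚ)
    (hS1 : ∀ (l : ℕ) (x : ℚ), ffall x l = ∑ j ∈ Finset.range (l + 1), S1 l j * x ^ j)
    (k : ℕ) : S1 k k = 1 := by
  induction k with
  | zero =>
    have h := hS1 0 0
    rw [ffall] at h
    simpa using h.symm
  | succ k ih =>
    have hc := congrArg (fun p => Polynomial.coeff p (k + 1)) (spol_step S1 hS1 k)
    simp only [mul_sub, Polynomial.coeff_sub, Polynomial.coeff_mul_X, Polynomial.coeff_mul_C,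
      spol_coeff] at hc
    rw [if_pos (by omega), if_pos (by omega), if_neg (by omega)] at hc
    rw [hc, ih]; ring

lemma pascal_cast (n k : ℕ) (h1 : 1 ≤ k) (h2 : 1 ≤ n) :
    (n.choose k : ℚ) = ((n-1).choose (k-1) : ℚ) + ((n-1).choose k : ℚ) := by
  obtain ⟨n', rfl⟩ : ∃ n', n = n' + 1 := ⟨n - 1, by omega⟩
  obtain ⟨k', rfl⟩ : ∃ k', k = k' + 1 := ⟨k - 1, by omega⟩
  simp only [Nat.add_sub_cancel, Nat.choose_succ_succ]
  push_cast
  ring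

lemma choose_right_cast (n k : ℕ) :
    ((n.choose (k+1) : ℚ)) * ((k : ℚ) + 1) = (n.choose k : ℚ) * ((n - k : ℕ) : ℚ) := by
  exact_mod_cast congrArg (Nat.cast : ℕ → ℚ) (Nat.choose_succ_right_eq n k)

lemma succ_mul_choose_cast (n k : ℕ) (hn : 1 ≤ n) :
    ((k : ℚ) + 1) * (n.choose (k+1) : ℚ) = (n : ℚ) * ((n-1).choose k : ℚ) := by
  have h := Nat.add_one_mul_choose_eq (n-1) k
  rw [show n - 1 + 1 = n by omega] at h
  have := congrArg (Nat.cast : ℕ → ℚ) h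
  push_cast at this
  linarith [this]


theorem stmt16 (r : ℕ) (a : Fin r → ℚ) (ha : ∀ j, a j ≠ 0) (D : ℕ → ℚ → ℚ)
    (hD : ∀ x : ℚ, (∏ j, (onePow (a j) - 1)) * egf (fun n => D n x) = log1p ^ r * onePow x)
    (E : Fin r → ℕ → ℚ → ℚ)
    (hE : ∀ (j : Fin r) (x : ℚ),
      ((onePow (a j) - 1) * ∏ i, (onePow (a i) - 1)) * egf (fun n => E j n x) =
        log1p ^ (r + 1) * onePow x)
    (c : ℕ → ℚ) (hc : log1p * egf c = PowerSeries.X)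
    (S1 : ℕ → ℕ → ℚ) (hS1 : ∀ (l : ℕ) (x : ℚ), ffall x l = ∑ j ∈ Finset.range (l + 1), S1 l j * x ^ j)
    (n m : ℕ) (hm : 1 ≤ m) (hmn : m + 1 ≤ n) :
    ∑ l ∈ Finset.range (n - m + 1), (n.choose l : ℚ) * S1 (n - l) m * D l 0 =
      (∑ l ∈ Finset.range (n - m + 1),
        ((n - 1).choose l : ℚ) * S1 (n - l - 1) (m - 1) * D l (-1))
      + (1 / n) * ∑ l ∈ Finset.range (n - m),
          (n.choose (l + 1) : ℚ) * S1 (n - l - 1) m *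
          ((r : ℚ) * (∑ i ∈ Finset.range (l + 2),
              ((l + 1).choose i : ℚ) * c i * D (l + 1 - i) (-1))
            - ∑ j, ∑ i ∈ Finset.range (l + 2),
              ((l + 1).choose i : ℚ) * a j * c i * E j (l + 1 - i) (a j - 1)) := by
  have hn1 : 1 ≤ n := by omega
  have hnQ : (n : ℚ) ≠ 0 := Nat.cast_ne_zero.2 (by omega)
  have hPne : (∏ j, (onePow (a j) - 1)) ≠ 0 := by
    rw [Finset.prod_ne_zero_iff]
    exact fun j _ => onePow_sub_one_ne_zero_s16 (ha j)
  have hG0 : (∏ j, (onePow (a j) - 1)) * egf (fun n => D n 0) = log1p ^ r := by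
    have h := hD 0
    rwa [onePow_zero, mul_one] at h
  -- main power series identity
  have T := master r a ha (egf fun n => D n 0) (egf fun n => D n (-1)) (egf c)
    (fun j => egf fun n => E j n (a j - 1)) hG0 (hD (-1)) (fun j => hE j (a j - 1)) hc
  -- bracket identity
  have key1 : ∀ l : ℕ,
      (r : ℚ) * (∑ i ∈ Finset.range (l + 2),
          ((l + 1).choose i : ℚ) * c i * D (l + 1 - i) (-1))
        - ∑ j, ∑ i ∈ Finset.range (l + 2),
          ((l + 1).choose i : ℚ) * a j * c i * E j (l + 1 - i) (a j - 1)
      = ((l : ℚ) + 1) * D (l + 1) 0 := by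
    intro l
    have hi2 : ∀ i : ℕ, i ∈ Finset.range (l + 2) → i ≤ l + 1 := by
      intro i hi; rw [Finset.mem_range] at hi; omega
    have eL : (((l+1).factorial : ℕ) : ℚ) *
        coeff (l+1) (X * d⁄dX ℚ (egf fun k => D k 0)) = ((l : ℚ) + 1) * D (l + 1) 0 := by
      rw [coeff_succ_X_mul, coeff_derivative, coeff_egf]
      have hf : (((l+1).factorial : ℕ) : ℚ) ≠ 0 := by positivity
      field_simp
    have eR : (((l+1).factorial : ℕ) : ℚ) *
        coeff (l+1) (((r : ℕ) : ℚ⟦X⟧) * (egf c * egf (fun k => D k (-1)))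
          - ∑ j, C (a j) * (egf c * egf (fun k => E j k (a j - 1)))) =
        (r : ℚ) * (∑ i ∈ Finset.range (l + 2),
            ((l + 1).choose i : ℚ) * c i * D (l + 1 - i) (-1))
          - ∑ j, ∑ i ∈ Finset.range (l + 2),
            ((l + 1).choose i : ℚ) * a j * c i * E j (l + 1 - i) (a j - 1) := by
      rw [map_sub, mul_sub]
      congr 1
      · rw [show ((r : ℕ) : ℚ⟦X⟧) = C (r : ℚ) from (map_natCast (C) r).symm,
          coeff_C_mul, coeff_egf_mul, mul_left_comm, Finset.mul_sum]
        congr 1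
        apply Finset.sum_congr rfl
        intro i hi
        rw [fact_mul_div_fact (l+1) i (hi2 i hi) _]
        ring
      · rw [map_sum, Finset.mul_sum]
        apply Finset.sum_congr rfl
        intro j _
        rw [coeff_C_mul, coeff_egf_mul, mul_left_comm, Finset.mul_sum, Finset.mul_sum]
        apply Finset.sum_congr rfl
        intro i hi
        rw [fact_mul_div_fact (l+1) i (hi2 i hi) _]
        ring
    calc (r : ℚ) * (∑ i ∈ Finset.range (l + 2),
            ((l + 1).choose i : ℚ) * c i * D (l + 1 - i) (-1))
          - ∑ j, ∑ i ∈ Finset.range (l + 2),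
            ((l + 1).choose i : ℚ) * a j * c i * E j (l + 1 - i) (a j - 1)
        = (((l+1).factorial : ℕ) : ℚ) *
            coeff (l+1) (((r : ℕ) : ℚ⟦X⟧) * (egf c * egf (fun k => D k (-1)))
              - ∑ j, C (a j) * (egf c * egf (fun k => E j k (a j - 1)))) := eR.symm
      _ = (((l+1).factorial : ℕ) : ℚ) *
            coeff (l+1) (X * d⁄dX ℚ (egf fun k => D k 0)) := by rw [T]
      _ = ((l : ℚ) + 1) * D (l + 1) 0 := eL
  -- shift identity
  have hGG : egf (fun n => D n 0) = (1 + X) * egf (fun n => D n (-1)) := by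
    apply mul_left_cancel₀ hPne
    rw [hG0]
    calc log1p ^ r = log1p ^ r * ((1 + X) * onePow (-1)) := by
          rw [onePlusX_mul_onePow_neg_one, mul_one]
      _ = (1 + X) * (log1p ^ r * onePow (-1)) := by ring
      _ = (1 + X) * ((∏ j, (onePow (a j) - 1)) * egf (fun n => D n (-1))) := by rw [hD (-1)]
      _ = (∏ j, (onePow (a j) - 1)) * ((1 + X) * egf (fun n => D n (-1))) := by ring
  have key2 : ∀ l : ℕ, D (l + 1) 0 = D (l + 1) (-1) + ((l : ℚ) + 1) * D l (-1) := by
    intro l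
    have h := congrArg (coeff (l+1)) hGG
    rw [add_mul, one_mul, map_add, coeff_succ_X_mul, coeff_egf, coeff_egf, coeff_egf] at h
    have hf0 : ((l.factorial : ℕ) : ℚ) ≠ 0 := by positivity
    have hf1 : (((l+1).factorial : ℕ) : ℚ) ≠ 0 := by positivity
    have hfs : (((l+1).factorial : ℕ) : ℚ) = ((l : ℚ) + 1) * (l.factorial : ℚ) := by
      rw [Nat.factorial_succ]; push_cast; ring
    field_simp at h
    rw [hfs] at h
    have hK : ((l : ℚ) + 1) * (l.factorial : ℚ) * (l.factorial : ℚ) ≠ 0 := by positivity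
    apply mul_right_cancel₀ hK
    linear_combination (((l : ℚ) + 1) * (l.factorial : ℚ)) * h
  have key20 : D 0 0 = D 0 (-1) := by
    have h := congrArg (constantCoeff) hGG
    rw [map_mul, map_add, map_one, constantCoeff_X, add_zero, one_mul] at h
    have h0 : ∀ x : ℚ, constantCoeff (egf (fun n => D n x)) = D 0 x := by
      intro x
      rw [← coeff_zero_eq_constantCoeff, coeff_egf]
      simp
    rwa [h0, h0] at h
  -- derived facts
  have hA : ∀ l : ℕ, D l 0 = D l (-1) + (l : ℚ) * D (l - 1) (-1) := by
    intro l
    cases l with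
    | zero => simpa using key20
    | succ k =>
      have h := key2 k
      rw [show (k + 1 : ℕ) - 1 = k from by omega]
      push_cast
      linarith [h]
  have hst : ∀ l : ℕ, l < n - m →
      S1 (n - l) m = S1 (n - l - 1) (m - 1) - ((n - l - 1 : ℕ) : ℚ) * S1 (n - l - 1) m := by
    intro l hl
    have h := S1_rec S1 hS1 (k := n - l - 1) (j := m - 1) (by omega)
    rwa [show n - l - 1 + 1 = n - l from by omega, show m - 1 + 1 = m from by omega] at h
  -- fold the 1/n sum
  have h34 : (1 / (n : ℚ)) * ∑ l ∈ Finset.range (n - m),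
        (n.choose (l + 1) : ℚ) * S1 (n - l - 1) m *
          ((r : ℚ) * (∑ i ∈ Finset.range (l + 2),
              ((l + 1).choose i : ℚ) * c i * D (l + 1 - i) (-1))
            - ∑ j, ∑ i ∈ Finset.range (l + 2),
              ((l + 1).choose i : ℚ) * a j * c i * E j (l + 1 - i) (a j - 1))
      = ∑ l ∈ Finset.range (n - m), ((n-1).choose l : ℚ) * S1 (n - l - 1) m *
          (D (l + 1) (-1) + ((l : ℚ) + 1) * D l (-1)) := by
    rw [Finset.mul_sum]
    apply Finset.sum_congr rfl
    intro l _
    rw [key1 l, ← key2 l, one_div, inv_mul_eq_iff_eq_mul₀ hnQ]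
    linear_combination (S1 (n - l - 1) m * D (l + 1) 0) * succ_mul_choose_cast n l hn1
  rw [h34]
  -- expand the left side
  have hLHS : ∑ l ∈ Finset.range (n - m + 1), (n.choose l : ℚ) * S1 (n - l) m * D l 0
      = (∑ l ∈ Finset.range (n - m + 1), (n.choose l : ℚ) * S1 (n - l) m * D l (-1))
        + ∑ l ∈ Finset.range (n - m),
            ((l : ℚ) + 1) * (n.choose (l + 1) : ℚ) * S1 (n - l - 1) m * D l (-1) := by
    have e1 : ∀ l ∈ Finset.range (n - m + 1), (n.choose l : ℚ) * S1 (n - l) m * D l 0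
        = (n.choose l : ℚ) * S1 (n - l) m * D l (-1)
          + (l : ℚ) * (n.choose l : ℚ) * S1 (n - l) m * D (l - 1) (-1) := by
      intro l _
      rw [hA l]
      ring
    rw [Finset.sum_congr rfl e1, Finset.sum_add_distrib]
    congr 1
    rw [Finset.sum_range_succ']
    norm_num
    apply Finset.sum_congr rfl
    intro l _
    rfl
  rw [hLHS]
  -- expand the right hand new sum
  have hRHS2 : ∑ l ∈ Finset.range (n - m), ((n-1).choose l : ℚ) * S1 (n - l - 1) m *
          (D (l + 1) (-1) + ((l : ℚ) + 1) * D l (-1))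
      = (∑ l ∈ Finset.range (n - m + 1),
          (if l = 0 then 0 else ((n-1).choose (l - 1) : ℚ) * S1 (n - l) m * D l (-1)))
        + ∑ l ∈ Finset.range (n - m),
            ((l : ℚ) + 1) * ((n-1).choose l : ℚ) * S1 (n - l - 1) m * D l (-1) := by
    have e1 : ∀ l ∈ Finset.range (n - m), ((n-1).choose l : ℚ) * S1 (n - l - 1) m *
          (D (l + 1) (-1) + ((l : ℚ) + 1) * D l (-1))
        = ((n-1).choose l : ℚ) * S1 (n - l - 1) m * D (l + 1) (-1)
          + ((l : ℚ) + 1) * ((n-1).choose l : ℚ) * S1 (n - l - 1) m * D l (-1) := by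
      intro l _
      ring
    rw [Finset.sum_congr rfl e1, Finset.sum_add_distrib]
    congr 1
    rw [Finset.sum_range_succ', if_pos rfl, add_zero]
    apply Finset.sum_congr rfl
    intro l _
    rw [if_neg (by omega : ¬ (l + 1 = 0)),
      show l + 1 - 1 = l from by omega, show n - (l + 1) = n - l - 1 from by omega]
  rw [hRHS2]
  -- put everything over range (n - m + 1)
  have ext1 : ∀ v : ℕ → ℚ, ∑ l ∈ Finset.range (n - m), v l
      = ∑ l ∈ Finset.range (n - m + 1), (if l < n - m then v l else 0) := by
    intro v
    rw [Finset.sum_range_succ, if_neg (lt_irrefl _), add_zero]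
    exact Finset.sum_congr rfl fun l hl => (if_pos (Finset.mem_range.1 hl)).symm
  rw [ext1 (fun l => ((l : ℚ) + 1) * (n.choose (l + 1) : ℚ) * S1 (n - l - 1) m * D l (-1)),
    ext1 (fun l => ((l : ℚ) + 1) * ((n-1).choose l : ℚ) * S1 (n - l - 1) m * D l (-1)),
    ← Finset.sum_add_distrib, ← Finset.sum_add_distrib, ← Finset.sum_add_distrib]
  apply Finset.sum_congr rfl
  intro l hl
  rw [Finset.mem_range] at hl
  by_cases h0 : l = 0
  · subst h0
    rw [if_pos (by omega : (0:ℕ) < n - m), if_pos rfl, if_pos (by omega : (0:ℕ) < n - m)]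
    have hst0 := hst 0 (by omega)
    have hK : ((n - 0 - 1 : ℕ) : ℚ) = (n : ℚ) - 1 := by
      rw [show n - 0 - 1 = n - 1 from by omega, Nat.cast_sub (by omega : 1 ≤ n)]
      norm_num
    rw [hK] at hst0
    simp only [zero_add, Nat.choose_zero_right, Nat.choose_one_right, Nat.cast_one,
      Nat.cast_zero]
    linear_combination (D 0 (-1)) * hst0
  · by_cases hN : l = n - m
    · rw [if_neg (by omega : ¬ (l < n - m)), if_neg h0, if_neg (by omega : ¬ (l < n - m))]
      rw [show n - l = m from by omega]
      rw [S1_diag S1 hS1 m, S1_diag S1 hS1 (m - 1)]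
      have hp := pascal_cast n l (by omega) (by omega)
      linear_combination (D l (-1)) * hp
    · rw [if_pos (by omega : l < n - m), if_neg h0, if_pos (by omega : l < n - m)]
      have hK : ((n - l - 1 : ℕ) : ℚ) = (n : ℚ) - (l : ℚ) - 1 := by
        rw [show n - l - 1 = n - (l + 1) from by omega,
          Nat.cast_sub (by omega : l + 1 ≤ n)]
        push_cast
        ring
      have hst1 := hst l (by omega)
      rw [hK] at hst1
      have hp1 := pascal_cast n l (by omega) (by omega)
      have hp2 := pascal_cast n (l + 1) (by omega) (by omega)
      rw [show l + 1 - 1 = l from by omega] at hp2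
      have hcr := choose_right_cast (n - 1) l
      have hK2 : ((n - 1 - l : ℕ) : ℚ) = (n : ℚ) - (l : ℚ) - 1 := by
        rw [show n - 1 - l = n - (l + 1) from by omega,
          Nat.cast_sub (by omega : l + 1 ≤ n)]
        push_cast
        ring
      rw [hK2] at hcr
      linear_combination (S1 (n - l) m * D l (-1)) * hp1
        + (((l : ℚ) + 1) * S1 (n - l - 1) m * D l (-1)) * hp2
        + (S1 (n - l - 1) m * D l (-1)) * hcr
        + (((n-1).choose l : ℚ) * D l (-1)) * hst1
end
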